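/- Price of a degenerate digital option: fix a natural number x₀ ≤ T and let K = S0 * (1+u)^(x₀) * (1+d)^(T−x₀). Every predictable self-financing trading strategy whose terminal wealth is the digital payoff V ω = (if S T ω = K then 1 else 0) has initial wealth equal to (1+r)^(−T) * (T.choose x₀) * q^(x₀) * (1−q)^(T−x₀). (Since −1 < d < u, distinct numbers of up-moves give distinct terminal stock prices, so the event S T ω = K coincides with the event x(ω) = x₀.) -/

import Mathlib

open Finset

/-- Stock price at time `t` in the `T`-step CRR binomial model. -/
def crrStock (T : ℕ) (S0 u d : ℝ) (t : ℕ) (ω : Fin T → Bool) : ℝ :=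
  S0 * ∏ i ∈ Finset.univ.filter (fun i : Fin T => (i : ℕ) < t),
    (if ω i then 1 + u else 1 + d)

/-- A trading strategy `(a, b)` is predictable if the holdings chosen at time `t`
depend only on the first `t` coordinates of the trajectory. -/
def crrPredictable {T : ℕ} (a b : Fin T → (Fin T → Bool) → ℝ) : Prop :=
  ∀ (t : Fin T) (ω ω' : Fin T → Bool),
    (∀ i : Fin T, (i : ℕ) < (t : ℕ) → ω i = ω' i) →
      a t ω = a t ω' ∧ b t ω = b t ω'

/-- Self-financing condition for the strategy `(a, b)`. -/
def crrSelfFinancing {T : ℕ} (S0 u d r : ℝ) (a b : Fin T → (Fin T → Bool) → ℝ) : Prop :=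
  ∀ (t : ℕ) (ht : t + 1 < T) (ω : Fin T → Bool),
    a ⟨t, by omega⟩ ω * crrStock T S0 u d (t + 1) ω + b ⟨t, by omega⟩ ω * (1 + r) ^ (t + 1)
      = a ⟨t + 1, ht⟩ ω * crrStock T S0 u d (t + 1) ω + b ⟨t + 1, ht⟩ ω * (1 + r) ^ (t + 1)

/-- Initial wealth of the strategy `(a, b)`. -/
def crrInitialWealth {T : ℕ} (hT : 0 < T) (S0 : ℝ) (a b : Fin T → (Fin T → Bool) → ℝ)
    (ω : Fin T → Bool) : ℝ :=
  a ⟨0, hT⟩ ω * S0 + b ⟨0, hT⟩ ω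

/-- Terminal wealth of the strategy `(a, b)`. -/
def crrTerminalWealth {T : ℕ} (hT : 0 < T) (S0 u d r : ℝ)
    (a b : Fin T → (Fin T → Bool) → ℝ) (ω : Fin T → Bool) : ℝ :=
  a ⟨T - 1, by omega⟩ ω * crrStock T S0 u d T ω + b ⟨T - 1, by omega⟩ ω * (1 + r) ^ T

/-- Number of up-moves in the trajectory `ω`. -/
def crrUps {T : ℕ} (ω : Fin T → Bool) : ℕ :=
  (Finset.univ.filter (fun i : Fin T => ω i = true)).card

lemma crrStock_congr {T : ℕ} (S0 u d : ℝ) (t : ℕ) (ω ω' : Fin T → Bool)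
    (h : ∀ i : Fin T, (i : ℕ) < t → ω i = ω' i) :
    crrStock T S0 u d t ω = crrStock T S0 u d t ω' := by
  unfold crrStock
  congr 1
  refine Finset.prod_congr rfl fun i hi => ?_
  simp only [mem_filter] at hi
  rw [h i hi.2]

lemma crrStock_succ {T : ℕ} (S0 u d : ℝ) (t : ℕ) (ht : t < T) (ω : Fin T → Bool) :
    crrStock T S0 u d (t + 1) ω
      = crrStock T S0 u d t ω * (if ω ⟨t, ht⟩ then 1 + u else 1 + d) := by
  unfold crrStock
  have hset : (univ.filter (fun i : Fin T => (i : ℕ) < t + 1))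
      = insert ⟨t, ht⟩ (univ.filter (fun i : Fin T => (i : ℕ) < t)) := by
    ext i
    simp only [mem_filter, mem_univ, true_and, mem_insert, Fin.ext_iff]
    omega
  rw [hset, Finset.prod_insert (by simp)]
  ring

lemma crrStock_zero {T : ℕ} (S0 u d : ℝ) (ω : Fin T → Bool) :
    crrStock T S0 u d 0 ω = S0 := by
  unfold crrStock; simp

/-- Wealth at time `t` (terminal wealth at `t ≥ T`). -/
def crrVal {T : ℕ} (hT : 0 < T) (S0 u d r : ℝ) (a b : Fin T → (Fin T → Bool) → ℝ)
    (t : ℕ) (ω : Fin T → Bool) : ℝ :=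
  if h : t < T then a ⟨t, h⟩ ω * crrStock T S0 u d t ω + b ⟨t, h⟩ ω * (1 + r) ^ t
  else crrTerminalWealth hT S0 u d r a b ω

lemma crr_key {T : ℕ} (hT : 0 < T) (S0 u d r : ℝ)
    (hd : -1 < d) (hdr : d < r) (hru : r < u)
    (a b : Fin T → (Fin T → Bool) → ℝ)
    (hpred : crrPredictable a b) (hsf : crrSelfFinancing S0 u d r a b) :
    ∀ k t, t + k = T → ∀ ω,
      crrVal hT S0 u d r a b t ω * (1 + r) ^ k
        = ∑ ω' ∈ univ.filter (fun ω' : Fin T → Bool => ∀ i : Fin T, (i : ℕ) < t → ω' i = ω i),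
            crrTerminalWealth hT S0 u d r a b ω' *
              ∏ i ∈ univ.filter (fun i : Fin T => t ≤ (i : ℕ)),
                (if ω' i then (r - d) / (u - d) else 1 - (r - d) / (u - d)) := by
  set q : ℝ := (r - d) / (u - d) with hq
  intro k
  induction k with
  | zero =>
    intro t htk ω
    have hle : T ≤ t := by omega
    have hA : (univ.filter (fun ω' : Fin T → Bool => ∀ i : Fin T, (i : ℕ) < t → ω' i = ω i))
        = {ω} := by
      ext ω'
      simp only [mem_filter, mem_univ, true_and, mem_singleton]
      constructor
      · intro h; funext i; exact h i (lt_of_lt_of_le i.isLt hle)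
      · intro h; subst h; exact fun i _ => rfl
    have hw : (univ.filter (fun i : Fin T => t ≤ (i : ℕ))) = (∅ : Finset (Fin T)) := by
      ext i; simp only [mem_filter, mem_univ, true_and, notMem_empty, iff_false, not_le]
      exact lt_of_lt_of_le i.isLt hle
    rw [hA, hw]
    have : ¬ t < T := by omega
    simp [crrVal, this, pow_zero]
  | succ k ih =>
    intro t htk ω
    have ht : t < T := by omega
    set tf : Fin T := ⟨t, ht⟩ with htf
    set ωu : Fin T → Bool := Function.update ω tf true with hωu
    set ωd : Fin T → Bool := Function.update ω tf false with hωd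
    have hagree : ∀ (v : Bool) (i : Fin T), (i : ℕ) < t → ω i = Function.update ω tf v i := by
      intro v i hi
      rw [Function.update_of_ne (by simp [Fin.ext_iff, htf]; omega)]
    -- one-step wealth at time t+1 with positions from t
    have hvalsucc : ∀ ω' : Fin T → Bool, crrVal hT S0 u d r a b (t+1) ω'
        = a tf ω' * crrStock T S0 u d (t+1) ω' + b tf ω' * (1 + r) ^ (t+1) := by
      intro ω'
      unfold crrVal
      by_cases h1 : t + 1 < T
      · rw [dif_pos h1]
        exact (hsf t h1 ω').symm
      · rw [dif_neg h1]
        have hT1 : t + 1 = T := by omega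
        have hfin : tf = (⟨T - 1, Nat.sub_lt hT one_pos⟩ : Fin T) := by
          apply Fin.ext; simp only [htf]; omega
        unfold crrTerminalWealth
        rw [hfin, hT1]
    -- one-step pricing
    have hstep : (1 + r) * crrVal hT S0 u d r a b t ω
        = q * crrVal hT S0 u d r a b (t+1) ωu + (1 - q) * crrVal hT S0 u d r a b (t+1) ωd := by
      rw [hvalsucc ωu, hvalsucc ωd]
      have hau : a tf ωu = a tf ω := (hpred tf ωu ω (fun i hi => (hagree true i hi).symm)).1
      have hbu : b tf ωu = b tf ω := (hpred tf ωu ω (fun i hi => (hagree true i hi).symm)).2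
      have had : a tf ωd = a tf ω := (hpred tf ωd ω (fun i hi => (hagree false i hi).symm)).1
      have hbd : b tf ωd = b tf ω := (hpred tf ωd ω (fun i hi => (hagree false i hi).symm)).2
      have hsu : crrStock T S0 u d (t+1) ωu = crrStock T S0 u d t ω * (1 + u) := by
        rw [crrStock_succ S0 u d t ht]
        rw [← crrStock_congr S0 u d t ω ωu (hagree true)]
        simp [hωu, htf]
      have hsd : crrStock T S0 u d (t+1) ωd = crrStock T S0 u d t ω * (1 + d) := by
        rw [crrStock_succ S0 u d t ht]
        rw [← crrStock_congr S0 u d t ω ωd (hagree false)]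
        simp [hωd, htf]
      rw [hau, hbu, had, hbd, hsu, hsd]
      unfold crrVal
      rw [dif_pos ht]
      have hud : u - d ≠ 0 := by intro h; nlinarith
      have hqr : q * (1 + u) + (1 - q) * (1 + d) = 1 + r := by
        have hqud : q * (u - d) = r - d := by rw [hq]; field_simp
        nlinarith [hqud]
      simp only [← htf, pow_succ]
      linear_combination (-(a tf ω * crrStock T S0 u d t ω)) * hqr
    -- sum splitting
    have hku : t + 1 + k = T := by omega
    have ihu := ih (t + 1) hku ωu
    have ihd := ih (t + 1) hku ωd
    have hwins : (univ.filter (fun i : Fin T => t ≤ (i : ℕ)))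
        = insert tf (univ.filter (fun i : Fin T => t + 1 ≤ (i : ℕ))) := by
      ext i
      simp only [mem_filter, mem_univ, true_and, mem_insert, htf, Fin.ext_iff]
      omega
    have htf_not : tf ∉ univ.filter (fun i : Fin T => t + 1 ≤ (i : ℕ)) := by
      simp [htf]
    have hmemA : ∀ (v : Bool) (ω' : Fin T → Bool),
        (∀ i : Fin T, (i : ℕ) < t + 1 → ω' i = Function.update ω tf v i)
        ↔ ((∀ i : Fin T, (i : ℕ) < t → ω' i = ω i) ∧ ω' tf = v) := by
      intro v ω'
      constructor
      · intro h
        constructor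
        · intro i hi
          have hine : i ≠ tf := by
            intro he; rw [he] at hi; simp only [htf] at hi; omega
          rw [h i (by omega), Function.update_of_ne hine]
        · rw [h tf (by simp [htf]), Function.update_self]
      · rintro ⟨h1, h2⟩ i hi
        by_cases hit : i = tf
        · subst hit; rw [h2, Function.update_self]
        · have hlt : (i : ℕ) < t := by
            have : (i : ℕ) ≠ t := by
              intro he; exact hit (Fin.ext (by simp [htf, he]))
            omega
          rw [h1 i hlt, Function.update_of_ne hit]
    have hAu : (univ.filter (fun ω' : Fin T → Bool => ∀ i : Fin T, (i : ℕ) < t → ω' i = ω i)).filter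
          (fun ω' => ω' tf = true)
        = univ.filter (fun ω' : Fin T → Bool => ∀ i : Fin T, (i : ℕ) < t + 1 → ω' i = ωu i) := by
      ext ω'
      simp only [mem_filter, mem_univ, true_and, hωu]
      rw [hmemA true]
    have hAd : (univ.filter (fun ω' : Fin T → Bool => ∀ i : Fin T, (i : ℕ) < t → ω' i = ω i)).filter
          (fun ω' => ¬ ω' tf = true)
        = univ.filter (fun ω' : Fin T → Bool => ∀ i : Fin T, (i : ℕ) < t + 1 → ω' i = ωd i) := by
      ext ω'
      simp only [mem_filter, mem_univ, true_and, hωd, Bool.not_eq_true]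
      rw [hmemA false]
    have hsumu : ∑ ω' ∈ univ.filter (fun ω' : Fin T → Bool =>
            ∀ i : Fin T, (i : ℕ) < t + 1 → ω' i = ωu i),
          crrTerminalWealth hT S0 u d r a b ω' *
            ∏ i ∈ univ.filter (fun i : Fin T => t ≤ (i : ℕ)), (if ω' i then q else 1 - q)
        = q * ∑ ω' ∈ univ.filter (fun ω' : Fin T → Bool =>
            ∀ i : Fin T, (i : ℕ) < t + 1 → ω' i = ωu i),
          crrTerminalWealth hT S0 u d r a b ω' *
            ∏ i ∈ univ.filter (fun i : Fin T => t + 1 ≤ (i : ℕ)), (if ω' i then q else 1 - q) := by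
      rw [Finset.mul_sum]
      refine Finset.sum_congr rfl fun ω' hω' => ?_
      simp only [mem_filter, mem_univ, true_and] at hω'
      have h2 : ω' tf = true := ((hmemA true ω').1 (by simpa [hωu] using hω')).2
      rw [hwins, Finset.prod_insert htf_not, h2]
      norm_num
      try ring
    have hsumd : ∑ ω' ∈ univ.filter (fun ω' : Fin T → Bool =>
            ∀ i : Fin T, (i : ℕ) < t + 1 → ω' i = ωd i),
          crrTerminalWealth hT S0 u d r a b ω' *
            ∏ i ∈ univ.filter (fun i : Fin T => t ≤ (i : ℕ)), (if ω' i then q else 1 - q)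
        = (1 - q) * ∑ ω' ∈ univ.filter (fun ω' : Fin T → Bool =>
            ∀ i : Fin T, (i : ℕ) < t + 1 → ω' i = ωd i),
          crrTerminalWealth hT S0 u d r a b ω' *
            ∏ i ∈ univ.filter (fun i : Fin T => t + 1 ≤ (i : ℕ)), (if ω' i then q else 1 - q) := by
      rw [Finset.mul_sum]
      refine Finset.sum_congr rfl fun ω' hω' => ?_
      simp only [mem_filter, mem_univ, true_and] at hω'
      have h2 : ω' tf = false := ((hmemA false ω').1 (by simpa [hωd] using hω')).2
      rw [hwins, Finset.prod_insert htf_not, h2]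
      norm_num
      try ring
    calc crrVal hT S0 u d r a b t ω * (1 + r) ^ (k + 1)
        = ((1 + r) * crrVal hT S0 u d r a b t ω) * (1 + r) ^ k := by rw [pow_succ]; ring
      _ = q * (crrVal hT S0 u d r a b (t + 1) ωu * (1 + r) ^ k)
            + (1 - q) * (crrVal hT S0 u d r a b (t + 1) ωd * (1 + r) ^ k) := by
          rw [hstep]; ring
      _ = _ := by
          rw [ihu, ihd, ← hsumu, ← hsumd, ← hAu, ← hAd,
            Finset.sum_filter_add_sum_filter_not]


lemma crr_prod_bool {T : ℕ} (ω : Fin T → Bool) (x y : ℝ) :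
    ∏ i : Fin T, (if ω i then x else y) = x ^ crrUps ω * y ^ (T - crrUps ω) := by
  rw [← Finset.prod_filter_mul_prod_filter_not univ (fun i => ω i = true)]
  have h1 : ∏ i ∈ univ.filter (fun i : Fin T => ω i = true), (if ω i then x else y)
      = x ^ crrUps ω := by
    rw [Finset.prod_congr rfl (fun i hi => ?_), Finset.prod_const, crrUps]
    simp only [mem_filter] at hi
    rw [if_pos hi.2]
  have h2 : ∏ i ∈ univ.filter (fun i : Fin T => ¬ ω i = true), (if ω i then x else y)
      = y ^ (T - crrUps ω) := by
    rw [Finset.prod_congr rfl (fun i hi => ?_), Finset.prod_const]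
    · congr 1
      have := Finset.card_filter_add_card_filter_not (s := univ)
        (p := fun i : Fin T => ω i = true)
      simp only [card_univ, Fintype.card_fin] at this
      unfold crrUps
      omega
    · simp only [mem_filter] at hi
      rw [if_neg hi.2]
  rw [h1, h2]

lemma crr_ups_le {T : ℕ} (ω : Fin T → Bool) : crrUps ω ≤ T := by
  have := Finset.card_filter_le (univ : Finset (Fin T)) (fun i => ω i = true)
  simpa [card_univ, crrUps] using this

lemma crr_card_ups (T x₀ : ℕ) :
    (univ.filter (fun ω : Fin T → Bool => crrUps ω = x₀)).card = T.choose x₀ := by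
  have h := Finset.card_powersetCard x₀ (univ : Finset (Fin T))
  simp only [card_univ, Fintype.card_fin] at h
  rw [← h]
  apply Finset.card_nbij' (i := fun ω => univ.filter (fun i : Fin T => ω i = true))
    (j := fun s => fun i => decide (i ∈ s))
  · intro ω hω
    simp only [Finset.mem_coe, mem_filter, mem_univ, true_and] at hω
    simp [Finset.mem_powersetCard, ← hω, crrUps]
  · intro s hs
    simp only [Finset.mem_coe, Finset.mem_powersetCard] at hs
    rw [Finset.mem_coe, mem_filter]
    simp only [mem_univ, true_and, crrUps]
    rw [← hs.2]
    congr 1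
    ext i
    simp
  · intro ω hω
    funext i
    simp
  · intro s hs
    ext i
    simp

lemma crr_mono (u d : ℝ) (hd : -1 < d) (hdu : d < u) (T n m : ℕ) (hnm : n < m) (hm : m ≤ T) :
    (1+u)^n * (1+d)^(T-n) < (1+u)^m * (1+d)^(T-m) := by
  have h1 : (0:ℝ) < 1 + d := by linarith
  have h1u : (0:ℝ) < 1 + u := by linarith
  have h2 : (1:ℝ) + d < 1 + u := by linarith
  have key : (1+u)^m = (1+u)^n * (1+u)^(m-n) := by
    rw [← pow_add]; congr 1; omega
  have key2 : (1+d)^(T-n) = (1+d)^(m-n) * (1+d)^(T-m) := by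
    rw [← pow_add]; congr 1; omega
  rw [key, key2]
  have hp : (1+d)^(m-n) < (1+u)^(m-n) := pow_lt_pow_left₀ h2 h1.le (by omega)
  have := mul_lt_mul_of_pos_left
    (mul_lt_mul_of_pos_right hp (pow_pos h1 (T-m))) (pow_pos h1u n)
  linear_combination this


lemma crrStock_top {T : ℕ} (S0 u d : ℝ) (ω : Fin T → Bool) :
    crrStock T S0 u d T ω = S0 * ((1+u) ^ (crrUps ω) * (1+d) ^ (T - crrUps ω)) := by
  unfold crrStock
  rw [Finset.filter_true_of_mem (fun i _ => i.isLt), crr_prod_bool]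

/-- the price of a degenerate digital option paying 1 exactly when the
terminal stock price equals `K = S0*(1+u)^(x₀)*(1+d)^(T-x₀)`. -/
theorem crr_digital_option_price
    (T : ℕ) (hT : 0 < T) (S0 u d r : ℝ) (hS0 : 0 < S0)
    (hd : -1 < d) (hdr : d < r) (hru : r < u)
    (x₀ : ℕ) (hx₀ : x₀ ≤ T)
    (a b : Fin T → (Fin T → Bool) → ℝ)
    (hpred : crrPredictable a b) (hsf : crrSelfFinancing S0 u d r a b)
    (hterm : ∀ ω, crrTerminalWealth hT S0 u d r a b ω =
      if crrStock T S0 u d T ω = S0 * (1 + u) ^ x₀ * (1 + d) ^ (T - x₀) then 1 else 0) :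
    ∀ ω, crrInitialWealth hT S0 a b ω =
      (1 + r) ^ (-(T : ℤ)) * (T.choose x₀ : ℝ)
        * ((r - d) / (u - d)) ^ x₀
        * (1 - (r - d) / (u - d)) ^ (T - x₀) := by
  have hiff : ∀ ω' : Fin T → Bool,
      (crrStock T S0 u d T ω' = S0 * (1 + u) ^ x₀ * (1 + d) ^ (T - x₀)) ↔ crrUps ω' = x₀ := by
    intro ω'
    rw [crrStock_top, mul_assoc]
    constructor
    · intro h
      have h' : (1+u) ^ (crrUps ω') * (1+d) ^ (T - crrUps ω')
          = (1+u) ^ x₀ * (1+d) ^ (T - x₀) := mul_left_cancel₀ (ne_of_gt hS0) h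
      by_contra hne
      rcases Nat.lt_or_ge (crrUps ω') x₀ with hlt | hge
      · exact absurd h' (ne_of_lt (crr_mono u d hd (hdr.trans hru) T _ _ hlt hx₀))
      · have hlt : x₀ < crrUps ω' := by omega
        exact absurd h' (ne_of_gt (crr_mono u d hd (hdr.trans hru) T _ _ hlt (crr_ups_le ω')))
    · intro h; rw [h]
  intro ω
  have key := crr_key hT S0 u d r hd hdr hru a b hpred hsf T 0 (by omega) ω
  have hval0 : crrVal hT S0 u d r a b 0 ω = crrInitialWealth hT S0 a b ω := by
    unfold crrVal crrInitialWealth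
    rw [dif_pos hT, crrStock_zero, pow_zero, mul_one]
  have hfilt1 : univ.filter
      (fun ω' : Fin T → Bool => ∀ i : Fin T, (i : ℕ) < 0 → ω' i = ω i) = univ := by
    simp
  have hfilt2 : univ.filter (fun i : Fin T => 0 ≤ (i : ℕ)) = univ := by simp
  rw [hval0, hfilt1, hfilt2] at key
  have hsum : ∑ ω' ∈ (univ : Finset (Fin T → Bool)),
        crrTerminalWealth hT S0 u d r a b ω' *
          ∏ i ∈ (univ : Finset (Fin T)),
            (if ω' i then (r - d) / (u - d) else 1 - (r - d) / (u - d))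
      = (T.choose x₀ : ℝ) * ((r - d) / (u - d)) ^ x₀
          * (1 - (r - d) / (u - d)) ^ (T - x₀) := by
    calc ∑ ω' ∈ (univ : Finset (Fin T → Bool)),
          crrTerminalWealth hT S0 u d r a b ω' *
            ∏ i ∈ (univ : Finset (Fin T)),
              (if ω' i then (r - d) / (u - d) else 1 - (r - d) / (u - d))
        = ∑ ω' ∈ (univ : Finset (Fin T → Bool)),
            (if crrUps ω' = x₀ then
              ((r - d) / (u - d)) ^ x₀ * (1 - (r - d) / (u - d)) ^ (T - x₀) else 0) := by
          refine Finset.sum_congr rfl fun ω' _ => ?_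
          rw [hterm ω', crr_prod_bool]
          by_cases hc : crrUps ω' = x₀
          · rw [if_pos ((hiff ω').2 hc), if_pos hc, hc, one_mul]
          · rw [if_neg (fun hk => hc ((hiff ω').1 hk)), if_neg hc, zero_mul]
      _ = ∑ ω' ∈ univ.filter (fun ω' : Fin T → Bool => crrUps ω' = x₀),
            (((r - d) / (u - d)) ^ x₀ * (1 - (r - d) / (u - d)) ^ (T - x₀)) :=
          (Finset.sum_filter _ _).symm
      _ = (T.choose x₀ : ℝ) * ((r - d) / (u - d)) ^ x₀
            * (1 - (r - d) / (u - d)) ^ (T - x₀) := by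
          rw [Finset.sum_const, crr_card_ups, nsmul_eq_mul]; ring
  have key2 := key.trans hsum
  have hr : (0:ℝ) < 1 + r := by linarith
  have hrT : (1+r : ℝ) ^ T ≠ 0 := pow_ne_zero _ (ne_of_gt hr)
  have hdiv : crrInitialWealth hT S0 a b ω
      = ((T.choose x₀ : ℝ) * ((r - d) / (u - d)) ^ x₀
          * (1 - (r - d) / (u - d)) ^ (T - x₀)) / (1 + r) ^ T := by
    rw [eq_div_iff hrT]; exact key2
  rw [zpow_neg, zpow_natCast, hdiv]
  ring
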